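/- Let x be an EFX0 allocation of a set S ⊆ M of items, and let j ∈ M \ S be an item with v_{hj} ≤ 0 for every agent h. Let i be an agent with v_{ij} = 0 such that every agent h who envies i under x (i.e., v_h(x_h) < v_h(x_i)) has v_{hj} < 0. Then the allocation x' obtained from x by adding j to the bundle of agent i is an EFX0 allocation of S ∪ {j}. -/

import Mathlib

open scoped Classical
open Finset

noncomputable section FairDivision

variable {N I : Type*}

/-- Additive value of agent `i` for a bundle `S`. -/
def bval (v : N → I → ℝ) (i : N) (S : Finset I) : ℝ := ∑ j ∈ S, v i j

/-- `x` is an allocation of the item set `S`: the bundles are pairwise disjoint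
and together cover exactly `S`. -/
def IsAllocation [Fintype N] (x : N → Finset I) (S : Finset I) : Prop :=
  (∀ i h : N, i ≠ h → Disjoint (x i) (x h)) ∧ Finset.univ.biUnion x = S

/-- Envy-freeness up to any item (mixed manna version). -/
def EFX (v : N → I → ℝ) (x : N → Finset I) : Prop :=
  ∀ i h : N,
    (∀ g ∈ x h, 0 < v i g → bval v i (x i) ≥ bval v i ((x h).erase g)) ∨
    (∀ c ∈ x i, v i c < 0 → bval v i ((x i).erase c) ≥ bval v i (x h))

/-- The stronger notion EFX₀, where goods of zero value are also considered. -/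
def EFX0 (v : N → I → ℝ) (x : N → Finset I) : Prop :=
  ∀ i h : N,
    (∀ g ∈ x h, 0 ≤ v i g → bval v i (x i) ≥ bval v i ((x h).erase g)) ∨
    (∀ c ∈ x i, v i c < 0 → bval v i ((x i).erase c) ≥ bval v i (x h))

/-- `dpos v x i`: the maximin good value `d_i(x)`: the maximum, over agents `h ≠ i`
whose bundle contains an item valued positively by `i`, of the minimum value
(for `i`) of such an item in `x h`; `0` if no such agent exists. -/
def dpos [Fintype N] (v : N → I → ℝ) (x : N → Finset I) (i : N) : ℝ :=
  if hA : (Finset.univ.filter fun h =>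
      h ≠ i ∧ ((x h).filter fun j => 0 < v i j).Nonempty).Nonempty then
    (Finset.univ.filter fun h =>
        h ≠ i ∧ ((x h).filter fun j => 0 < v i j).Nonempty).sup' hA fun h =>
      if hB : ((x h).filter fun j => 0 < v i j).Nonempty then
        ((x h).filter fun j => 0 < v i j).inf' hB fun j => v i j
      else 0
  else 0

/-- `dnn v x i`: the variant `d⁰_i(x)` of the maximin good value where
nonnegatively-valued items are considered. -/
def dnn [Fintype N] (v : N → I → ℝ) (x : N → Finset I) (i : N) : ℝ :=
  if hA : (Finset.univ.filter fun h =>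
      h ≠ i ∧ ((x h).filter fun j => 0 ≤ v i j).Nonempty).Nonempty then
    (Finset.univ.filter fun h =>
        h ≠ i ∧ ((x h).filter fun j => 0 ≤ v i j).Nonempty).sup' hA fun h =>
      if hB : ((x h).filter fun j => 0 ≤ v i j).Nonempty then
        ((x h).filter fun j => 0 ≤ v i j).inf' hB fun j => v i j
      else 0
  else 0

/-- Proportional share of agent `i`. -/
def propShare [Fintype N] (v : N → I → ℝ) (M : Finset I) (i : N) : ℝ :=
  bval v i M / (Fintype.card N : ℝ)

/-- Proportionality up to the maximin good or any bad. -/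
def PropMX [Fintype N] (v : N → I → ℝ) (M : Finset I) (x : N → Finset I) : Prop :=
  ∀ i : N,
    bval v i (x i) + dpos v x i ≥ propShare v M i ∨
    (∀ c ∈ x i, v i c < 0 → bval v i ((x i).erase c) ≥ propShare v M i)

/-- The stronger notion PropMX₀. -/
def PropMX0 [Fintype N] (v : N → I → ℝ) (M : Finset I) (x : N → Finset I) : Prop :=
  ∀ i : N,
    bval v i (x i) + dnn v x i ≥ propShare v M i ∨
    (∀ c ∈ x i, v i c < 0 → bval v i ((x i).erase c) ≥ propShare v M i)

/-- Utilitarian social welfare. -/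
def SW [Fintype N] (v : N → I → ℝ) (x : N → Finset I) : ℝ :=
  ∑ i : N, bval v i (x i)

/-- `y` Pareto-dominates `x`. -/
def ParetoDominates [Fintype N] (v : N → I → ℝ) (y x : N → Finset I) : Prop :=
  (∀ i : N, bval v i (y i) ≥ bval v i (x i)) ∧ ∃ h : N, bval v h (y h) > bval v h (x h)

/-- `x` is Pareto-optimal among allocations of `M`. -/
def ParetoOptimal [Fintype N] (v : N → I → ℝ) (M : Finset I) (x : N → Finset I) : Prop :=
  ¬ ∃ y : N → Finset I, IsAllocation y M ∧ ParetoDominates v y x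

/-- `x` maximizes the social welfare over all allocations of `M`. -/
def MaxSW [Fintype N] (v : N → I → ℝ) (M : Finset I) (x : N → Finset I) : Prop :=
  ∀ y : N → Finset I, IsAllocation y M → SW v y ≤ SW v x

/-- A set `B` of (pure bad) items is identically ordered (IDO): it can be enumerated
as `c₁, …, c_k` with `v i c₁ ≤ v i c₂ ≤ … ≤ v i c_k` for every agent `i`. -/
def IDO (v : N → I → ℝ) (B : Finset I) : Prop :=
  ∃ l : List I, l.Nodup ∧ l.toFinset = B ∧ ∀ i : N, (l.map (v i)).Pairwise (· ≤ ·)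

end FairDivision

/-- Adding an item `j ∈ M \ S` that no agent values positively to
the bundle of an agent `i` with `v i j = 0`, such that every agent envying `i`
values `j` negatively, preserves EFX₀. -/
theorem efx0_preserved_adding_zero_item {N I : Type*} [Fintype N] [Fintype I] [Nonempty N]
    (v : N → I → ℝ) (M S : Finset I) (x : N → Finset I) (j : I) (i : N)
    (hS : S ⊆ M) (hx : IsAllocation x S) (hEFX0 : EFX0 v x)
    (hj : j ∈ M \ S) (hneg : ∀ h : N, v h j ≤ 0) (hzero : v i j = 0)
    (henvy : ∀ h : N, bval v h (x h) < bval v h (x i) → v h j < 0) :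
    IsAllocation (Function.update x i (insert j (x i))) (insert j S) ∧
      EFX0 v (Function.update x i (insert j (x i))) := by
  obtain ⟨hdisj, hcover⟩ := hx
  have hjS : j ∉ S := (Finset.mem_sdiff.mp hj).2
  have hjx : ∀ h : N, j ∉ x h := by
    intro h hmem
    exact hjS (hcover ▸ Finset.mem_biUnion.mpr ⟨h, Finset.mem_univ h, hmem⟩)
  have bvalins : ∀ (a : N) (T : Finset I), j ∉ T →
      bval v a (insert j T) = v a j + bval v a T := by
    intro a T h; exact Finset.sum_insert h
  have bvalerase : ∀ (a : N) (T : Finset I) (g : I), g ∈ T →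
      bval v a (T.erase g) = bval v a T - v a g := by
    intro a T g h; exact Finset.sum_erase_eq_sub h
  constructor
  · constructor
    · intro a b hab
      by_cases ha : a = i <;> by_cases hb : b = i
      · exact absurd (ha.trans hb.symm) hab
      · subst ha
        simp only [Function.update_self, Function.update_of_ne hb]
        rw [Finset.insert_eq, Finset.disjoint_union_left]
        exact ⟨Finset.disjoint_singleton_left.mpr (hjx b), hdisj a b hab⟩
      · subst hb
        simp only [Function.update_self, Function.update_of_ne ha]
        rw [Finset.insert_eq, Finset.disjoint_union_right]
        exact ⟨Finset.disjoint_singleton_right.mpr (hjx a), hdisj a b hab⟩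
      · simp only [Function.update_of_ne ha, Function.update_of_ne hb]
        exact hdisj a b hab
    · ext g
      simp only [Finset.mem_biUnion, Finset.mem_univ, true_and, Finset.mem_insert,
        Function.update_apply]
      constructor
      · rintro ⟨h, hg⟩
        by_cases hh : h = i
        · rw [if_pos hh] at hg
          rcases Finset.mem_insert.mp hg with h1 | h1
          · exact Or.inl h1
          · exact Or.inr (hcover ▸ Finset.mem_biUnion.mpr ⟨i, Finset.mem_univ i, h1⟩)
        · rw [if_neg hh] at hg
          exact Or.inr (hcover ▸ Finset.mem_biUnion.mpr ⟨h, Finset.mem_univ h, hg⟩)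
      · rintro (h1 | h1)
        · exact ⟨i, by simp [h1]⟩
        · obtain ⟨h, _, hg⟩ := Finset.mem_biUnion.mp (hcover ▸ h1)
          refine ⟨h, ?_⟩
          by_cases hh : h = i
          · subst hh; simp [Finset.mem_insert, hg]
          · rw [if_neg hh]; exact hg
  · intro a b
    by_cases ha : a = i
    · subst ha
      have hins : bval v a (insert j (x a)) = bval v a (x a) := by
        rw [bvalins a (x a) (hjx a), hzero]; ring
      by_cases hb : b = a
      · subst hb
        left
        intro g hg hvg
        simp only [Function.update_self] at hg ⊢
        rw [bvalerase b _ g hg]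
        linarith
      · simp only [Function.update_self, Function.update_of_ne hb]
        rcases hEFX0 a b with h1 | h2
        · left
          intro g hg hvg
          rw [hins]
          exact h1 g hg hvg
        · right
          intro c hc hvc
          have hcj : c ≠ j := by
            intro h; rw [h, hzero] at hvc; exact absurd hvc (lt_irrefl 0)
          have hcx : c ∈ x a := by
            rcases Finset.mem_insert.mp hc with h | h
            · exact absurd h hcj
            · exact h
          rw [Finset.erase_insert_of_ne (Ne.symm hcj),
            bvalins a _ (fun h => hjx a (Finset.mem_of_mem_erase h)), hzero, zero_add]
          exact h2 c hcx hvc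
    · by_cases hb : b = i
      · subst hb
        simp only [Function.update_self, Function.update_of_ne ha]
        rcases hEFX0 a b with h1 | h2
        · left
          intro g hg hvg
          rcases Finset.mem_insert.mp hg with hgj | hgx
          · subst hgj
            rw [Finset.erase_insert (hjx b)]
            by_contra hcon
            push_neg at hcon
            exact absurd hvg (not_le.mpr (henvy a hcon))
          · have hgj : g ≠ j := fun h => hjx b (h ▸ hgx)
            rw [Finset.erase_insert_of_ne (Ne.symm hgj),
              bvalins a _ (fun h => hjx b (Finset.mem_of_mem_erase h))]
            have := h1 g hgx hvg
            have := hneg a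
            linarith
        · right
          intro c hc hvc
          rw [bvalins a (x b) (hjx b)]
          have := h2 c hc hvc
          have := hneg a
          linarith
      · simp only [Function.update_of_ne ha, Function.update_of_ne hb]
        exact hEFX0 a b
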